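/- Let L be a linear subspace of R^n with dim(L) < n and let W ⊆ R^n be a Borel set invariant under addition of elements of L, i.e., W + v = W for every v ∈ L. Then for every a ∈ R^n, every σ ∈ (0, ∞), and every symmetric positive definite n×n matrix Σ, one has P_{a, σ²Σ}(W) = P_{a, σ²(Π_{L⊥} Σ Π_{L⊥} + Π_L)}(W), where Π_L and Π_{L⊥} are the orthogonal projections onto L and L⊥ respectively. -/

import Mathlib

open Matrix MeasureTheory
open scoped ENNReal
open scoped MatrixOrder

/-- The Gaussian measure `N(μ, S)` on `ℝⁿ`, defined through its Lebesgue density. -/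
noncomputable def gaussianMeasure {n : ℕ} (μ : Fin n → ℝ) (S : Matrix (Fin n) (Fin n) ℝ) :
    Measure (Fin n → ℝ) :=
  volume.withDensity fun y =>
    ENNReal.ofReal (Real.sqrt (((2 * Real.pi) ^ n * S.det)⁻¹) *
      Real.exp (-(1 / 2) * ((y - μ) ⬝ᵥ S⁻¹.mulVec (y - μ))))

/-- `P` is the orthogonal projection (matrix) onto the subspace `L` of `ℝⁿ`. -/
def IsProjOnto {n : ℕ} (P : Matrix (Fin n) (Fin n) ℝ) (L : Submodule ℝ (Fin n → ℝ)) : Prop :=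
  Pᵀ = P ∧ P * P = P ∧ (∀ x, P.mulVec x ∈ L) ∧ ∀ x ∈ L, P.mulVec x = x

namespace StmtAux


variable {n : ℕ}

lemma dot_conj (B C : Matrix (Fin n) (Fin n) ℝ) (v : Fin n → ℝ) :
    v ⬝ᵥ ((Bᵀ * C * B) *ᵥ v) = (B *ᵥ v) ⬝ᵥ (C *ᵥ (B *ᵥ v)) := by
  rw [← Matrix.mulVec_mulVec, ← Matrix.mulVec_mulVec, Matrix.dotProduct_mulVec,
    Matrix.vecMul_transpose]

lemma dot_conj' {B : Matrix (Fin n) (Fin n) ℝ} (C : Matrix (Fin n) (Fin n) ℝ)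
    (hBt : Bᵀ = B) (v : Fin n → ℝ) :
    v ⬝ᵥ ((B * C * B) *ᵥ v) = (B *ᵥ v) ⬝ᵥ (C *ᵥ (B *ᵥ v)) := by
  conv_lhs => rw [show B * C * B = Bᵀ * C * B by rw [hBt]]
  exact dot_conj B C v

lemma herm_of_transpose {A : Matrix (Fin n) (Fin n) ℝ} (h : Aᵀ = A) : A.IsHermitian := by
  rwa [Matrix.IsHermitian, Matrix.conjTranspose_eq_transpose_of_trivial]

lemma transpose_of_herm {A : Matrix (Fin n) (Fin n) ℝ} (h : A.IsHermitian) : Aᵀ = A := by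
  rwa [Matrix.IsHermitian, Matrix.conjTranspose_eq_transpose_of_trivial] at h

lemma dot_self_nonneg (v : Fin n → ℝ) : 0 ≤ v ⬝ᵥ v :=
  Finset.sum_nonneg fun i _ => mul_self_nonneg (v i)

lemma dot_self_pos {v : Fin n → ℝ} (hv : v ≠ 0) : 0 < v ⬝ᵥ v :=
  lt_of_le_of_ne (dot_self_nonneg v) fun h => hv (dotProduct_self_eq_zero.mp h.symm)

section Construction

variable (P S : Matrix (Fin n) (Fin n) ℝ)

lemma posDef_QSQ_P (hPt : Pᵀ = P) (hPP : P * P = P) (hS : S.PosDef) :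
    ((1 - P) * S * (1 - P) + P).PosDef := by
  set Q : Matrix (Fin n) (Fin n) ℝ := 1 - P with hQ
  have hSt : Sᵀ = S := transpose_of_herm hS.1
  have hQt : Qᵀ = Q := by rw [hQ, transpose_sub, transpose_one, hPt]
  refine Matrix.PosDef.of_dotProduct_mulVec_pos ?_ ?_
  · apply herm_of_transpose
    rw [transpose_add, transpose_mul, transpose_mul, hQt, hPt, hSt, Matrix.mul_assoc,
      ← Matrix.mul_assoc]
  · intro x hx
    have hx' : star x = x := by ext i; simp
    have hP1 : P = P * (1 : Matrix (Fin n) (Fin n) ℝ) * P := by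
      rw [Matrix.mul_one, hPP]
    have key : star x ⬝ᵥ ((Q * S * Q + P) *ᵥ x)
        = (Q *ᵥ x) ⬝ᵥ (S *ᵥ (Q *ᵥ x)) + (P *ᵥ x) ⬝ᵥ ((1 : Matrix (Fin n) (Fin n) ℝ) *ᵥ (P *ᵥ x)) := by
      rw [hx', add_mulVec, dotProduct_add]
      congr 1
      · exact dot_conj' S hQt x
      · conv_lhs => rw [hP1]
        exact dot_conj' 1 hPt x
    rw [key]
    by_cases hq : Q *ᵥ x = 0
    · have hpx : P *ᵥ x = x := by
        have h1 : Q *ᵥ x = x - P *ᵥ x := by rw [hQ, sub_mulVec, one_mulVec]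
        rw [h1] at hq
        exact (sub_eq_zero.mp hq).symm
      have h3 : 0 < (P *ᵥ x) ⬝ᵥ ((1 : Matrix (Fin n) (Fin n) ℝ) *ᵥ (P *ᵥ x)) := by
        rw [one_mulVec, hpx]; exact dot_self_pos hx
      have h1 : 0 ≤ (Q *ᵥ x) ⬝ᵥ (S *ᵥ (Q *ᵥ x)) := by rw [hq]; simp
      linarith
    · have h2 : 0 < (Q *ᵥ x) ⬝ᵥ (S *ᵥ (Q *ᵥ x)) := by
        have := hS.dotProduct_mulVec_pos hq
        have hs' : star (Q *ᵥ x) = Q *ᵥ x := by ext i; simp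
        rwa [hs'] at this
      have h3 : 0 ≤ (P *ᵥ x) ⬝ᵥ ((1 : Matrix (Fin n) (Fin n) ℝ) *ᵥ (P *ᵥ x)) := by
        rw [one_mulVec]; exact dot_self_nonneg _
      linarith

end Construction


variable {n : ℕ}

lemma mulw {X Y Z : Matrix (Fin n) (Fin n) ℝ} (h : X * Y = Z) (W : Matrix (Fin n) (Fin n) ℝ) :
    X * (Y * W) = Z * W := by rw [← Matrix.mul_assoc, h]

lemma exists_M (P S : Matrix (Fin n) (Fin n) ℝ) (hPt : Pᵀ = P) (hPP : P * P = P)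
    (hS : S.PosDef) :
    ∃ M : Matrix (Fin n) (Fin n) ℝ, M.det ≠ 0 ∧ (1 - P) * M = 1 - P ∧
      M * S * Mᵀ = (1 - P) * S * (1 - P) + P := by
  set Q : Matrix (Fin n) (Fin n) ℝ := 1 - P with hQdef
  clear_value Q
  have hSt : Sᵀ = S := transpose_of_herm hS.1
  have hQt : Qᵀ = Q := by rw [hQdef, transpose_sub, transpose_one, hPt]
  have hQP : Q * P = 0 := by rw [hQdef, Matrix.sub_mul, Matrix.one_mul, hPP, sub_self]
  have hPQ : P * Q = 0 := by rw [hQdef, Matrix.mul_sub, Matrix.mul_one, hPP, sub_self]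
  have hQQ : Q * Q = Q := by
    have h : (1 - P) * (1 - P) = 1 - P - (P - P * P) := by noncomm_ring
    rw [hQdef, h, hPP, sub_self, sub_zero]
  set A : Matrix (Fin n) (Fin n) ℝ := Q * S * Q + P with hAdef
  clear_value A
  have hA : A.PosDef := by
    rw [hAdef, hQdef]
    exact posDef_QSQ_P P S hPt hPP hS
  have hAt : Aᵀ = A := transpose_of_herm hA.1
  have hAdet : IsUnit A.det := (Matrix.isUnit_iff_isUnit_det A).mp hA.isUnit
  have hAit : A⁻¹ᵀ = A⁻¹ := by rw [Matrix.transpose_nonsing_inv, hAt]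
  have hAP : A * P = P := by
    rw [hAdef, Matrix.add_mul, hPP, Matrix.mul_assoc, hQP, Matrix.mul_zero, zero_add]
  have hiAP : A⁻¹ * P = P := by
    calc A⁻¹ * P = A⁻¹ * (A * P) := by rw [hAP]
    _ = A⁻¹ * A * P := by rw [Matrix.mul_assoc]
    _ = P := by rw [Matrix.nonsing_inv_mul A hAdet, Matrix.one_mul]
  have hQSQ : Q * (S * Q) = A - P := by rw [hAdef, add_sub_cancel_right, Matrix.mul_assoc]
  have e3 : A⁻¹ * (Q * (S * Q)) = Q := by
    rw [hQSQ, Matrix.mul_sub, Matrix.nonsing_inv_mul A hAdet, hiAP, hQdef]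
  set G : Matrix (Fin n) (Fin n) ℝ := P - P * (S * (A⁻¹ * Q)) with hGdef
  clear_value G
  have hQG : Q * G = 0 := by
    rw [hGdef, Matrix.mul_sub, hQP, mulw hQP, Matrix.zero_mul, sub_self]
  have hPG : P * G = G := by
    rw [hGdef, Matrix.mul_sub, hPP, mulw hPP]
  have hGP : G * P = P := by
    have h0 : A⁻¹ * Q * P = 0 := by rw [Matrix.mul_assoc, hQP, Matrix.mul_zero]
    rw [hGdef, Matrix.sub_mul, hPP, Matrix.mul_assoc, Matrix.mul_assoc, h0, Matrix.mul_zero,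
      Matrix.mul_zero, sub_zero]
  have hGSQ : G * (S * Q) = 0 := by
    rw [hGdef, Matrix.sub_mul]
    simp only [Matrix.mul_assoc]
    rw [e3, sub_self]
  have hGtQ : Gᵀ * Q = 0 := by
    have := congrArg Matrix.transpose hQG
    rwa [Matrix.transpose_mul, hQt, Matrix.transpose_zero] at this
  have hGtP : Gᵀ * P = Gᵀ := by
    have := congrArg Matrix.transpose hPG
    rwa [Matrix.transpose_mul, hPt] at this
  have hPGt : P * Gᵀ = P := by
    have := congrArg Matrix.transpose hGP
    rwa [Matrix.transpose_mul, hPt] at this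
  have hQSGt : Q * S * Gᵀ = 0 := by
    have := congrArg Matrix.transpose hGSQ
    rwa [Matrix.transpose_mul, Matrix.transpose_mul, hQt, hSt, Matrix.transpose_zero] at this
  set K : Matrix (Fin n) (Fin n) ℝ := Q + G * (S * Gᵀ) with hKdef
  clear_value K
  have hKt : Kᵀ = K := by
    rw [hKdef, transpose_add, hQt, Matrix.transpose_mul, Matrix.transpose_mul,
      Matrix.transpose_transpose, hSt, Matrix.mul_assoc]
  have hKQ : K * Q = Q := by
    rw [hKdef, Matrix.add_mul, hQQ, Matrix.mul_assoc, Matrix.mul_assoc, hGtQ, Matrix.mul_zero,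
      Matrix.mul_zero, add_zero]
  have hQK : Q * K = Q := by
    have := congrArg Matrix.transpose hKQ
    rwa [Matrix.transpose_mul, hKt, hQt] at this
  have hKP : K * P = K - Q := by
    rw [hKdef, Matrix.add_mul, hQP, zero_add, Matrix.mul_assoc, Matrix.mul_assoc, hGtP]
    abel
  have hPK : P * K = K - Q := by
    have := congrArg Matrix.transpose hKP
    rwa [Matrix.transpose_mul, hKt, hPt, transpose_sub, hKt, hQt] at this
  have hK : K.PosDef := by
    refine Matrix.PosDef.of_dotProduct_mulVec_pos ?_ ?_
    · exact herm_of_transpose hKt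
    · intro x hx
      have hx' : star x = x := by ext i; simp
      have hQ1 : Q = Q * (1 : Matrix (Fin n) (Fin n) ℝ) * Q := by rw [Matrix.mul_one, hQQ]
      have hGtt : Gᵀᵀ = G := Matrix.transpose_transpose G
      have key : star x ⬝ᵥ (K *ᵥ x)
          = (Q *ᵥ x) ⬝ᵥ ((1 : Matrix (Fin n) (Fin n) ℝ) *ᵥ (Q *ᵥ x))
            + (Gᵀ *ᵥ x) ⬝ᵥ (S *ᵥ (Gᵀ *ᵥ x)) := by
        rw [hx', hKdef, add_mulVec, dotProduct_add]
        congr 1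
        · conv_lhs => rw [hQ1]
          exact dot_conj' 1 hQt x
        · have h5 : G * (S * Gᵀ) = Gᵀᵀ * S * Gᵀ := by rw [hGtt, Matrix.mul_assoc]
          rw [h5, ← Matrix.mulVec_mulVec, ← Matrix.mulVec_mulVec, Matrix.dotProduct_mulVec,
            Matrix.vecMul_transpose]
      rw [key]
      by_cases hg : Gᵀ *ᵥ x = 0
      · have hqx : Q *ᵥ x ≠ 0 := by
          intro hq
          apply hx
          have hpx : P *ᵥ x = x := by
            have h1 : Q *ᵥ x = x - P *ᵥ x := by rw [hQdef, sub_mulVec, one_mulVec]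
            rw [h1] at hq
            exact (sub_eq_zero.mp hq).symm
          calc x = P *ᵥ x := hpx.symm
          _ = (P * Gᵀ) *ᵥ x := by rw [hPGt]
          _ = P *ᵥ (Gᵀ *ᵥ x) := by rw [Matrix.mulVec_mulVec]
          _ = 0 := by rw [hg, Matrix.mulVec_zero]
        have h1 : 0 < (Q *ᵥ x) ⬝ᵥ ((1 : Matrix (Fin n) (Fin n) ℝ) *ᵥ (Q *ᵥ x)) := by
          rw [one_mulVec]; exact dot_self_pos hqx
        have h2 : 0 ≤ (Gᵀ *ᵥ x) ⬝ᵥ (S *ᵥ (Gᵀ *ᵥ x)) := by rw [hg]; simp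
        linarith
      · have h2 : 0 < (Gᵀ *ᵥ x) ⬝ᵥ (S *ᵥ (Gᵀ *ᵥ x)) := by
          have := hS.dotProduct_mulVec_pos hg
          have hs' : star (Gᵀ *ᵥ x) = Gᵀ *ᵥ x := by ext i; simp
          rwa [hs'] at this
        have h1 : 0 ≤ (Q *ᵥ x) ⬝ᵥ ((1 : Matrix (Fin n) (Fin n) ℝ) *ᵥ (Q *ᵥ x)) := by
          rw [one_mulVec]; exact dot_self_nonneg _
        linarith
  have hKdet : IsUnit K.det := (Matrix.isUnit_iff_isUnit_det K).mp hK.isUnit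
  have hKinv : (K⁻¹).PosDef := hK.inv
  have hKiQ : K⁻¹ * Q = Q := by
    calc K⁻¹ * Q = K⁻¹ * (K * Q) := by rw [hKQ]
    _ = K⁻¹ * K * Q := by rw [Matrix.mul_assoc]
    _ = Q := by rw [Matrix.nonsing_inv_mul K hKdet, Matrix.one_mul]
  set R : Matrix (Fin n) (Fin n) ℝ := CFC.sqrt K⁻¹ with hRdef
  have hRR : R * R = K⁻¹ := CFC.sqrt_mul_sqrt_self K⁻¹ hKinv.posSemidef.nonneg
  have hRpsd : R.PosSemidef := Matrix.nonneg_iff_posSemidef.mp (CFC.sqrt_nonneg K⁻¹)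
  clear_value R
  have hRt : Rᵀ = R := transpose_of_herm hRpsd.1
  have hRdetne : R.det ≠ 0 := by
    have h1 : R.det * R.det = K⁻¹.det := by rw [← Matrix.det_mul, hRR]
    have h2 : K⁻¹.det ≠ 0 := ne_of_gt hKinv.det_pos
    intro h
    rw [h, mul_zero] at h1
    exact h2 h1.symm
  have hRdet : IsUnit R.det := hRdetne.isUnit
  set U : Matrix (Fin n) (Fin n) ℝ := Q - P with hUdef
  clear_value U
  have hUt : Uᵀ = U := by rw [hUdef, transpose_sub, hQt, hPt]
  have hQPone : Q + P = 1 := by rw [hQdef, sub_add_cancel]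
  have hUU : U * U = 1 := by
    have h : (Q - P) * (Q - P) = Q * Q - Q * P - (P * Q - P * P) := by noncomm_ring
    rw [hUdef, h, hQQ, hQP, hPQ, hPP, sub_zero, zero_sub, sub_neg_eq_add, hQPone]
  have hUinv : U⁻¹ = U := Matrix.inv_eq_right_inv hUU
  have hUQ : U * Q = Q := by rw [hUdef, Matrix.sub_mul, hQQ, hPQ, sub_zero]
  have hQU : Q * U = Q := by
    have := congrArg Matrix.transpose hUQ
    rwa [Matrix.transpose_mul, hUt, hQt] at this
  have hUP : U * P = -P := by rw [hUdef, Matrix.sub_mul, hQP, hPP, zero_sub]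
  have hPU : P * U = -P := by
    have := congrArg Matrix.transpose hUP
    rwa [Matrix.transpose_mul, hUt, hPt, transpose_neg, hPt] at this
  have hKUc : K * U = 2 • Q - K := by
    rw [hUdef, Matrix.mul_sub, hKQ, hKP, two_smul]
    abel
  have hUKc : U * K = 2 • Q - K := by
    rw [hUdef, Matrix.sub_mul, hQK, hPK, two_smul]
    abel
  have hUKU : U * (K * U) = K := by
    have h3 : U * (2 • Q) = 2 • Q := by rw [Matrix.mul_smul, hUQ]
    rw [hKUc, Matrix.mul_sub, hUKc, h3]
    abel
  have hUKcomm : U * K = K * U := by rw [hUKc, hKUc]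
  have hUKicomm : U * K⁻¹ = K⁻¹ * U := by
    have lhs : K⁻¹ * (K * U) * K⁻¹ = U * K⁻¹ := by
      simp only [← Matrix.mul_assoc]
      rw [Matrix.nonsing_inv_mul K hKdet, Matrix.one_mul]
    have rhs : K⁻¹ * (U * K) * K⁻¹ = K⁻¹ * U := by
      simp only [Matrix.mul_assoc]
      rw [Matrix.mul_nonsing_inv K hKdet, Matrix.mul_one]
    rw [← lhs, ← rhs, hUKcomm]
  have hUKiU : U * K⁻¹ * U = K⁻¹ := by
    rw [hUKicomm, Matrix.mul_assoc, hUU, Matrix.mul_one]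
  have hUconj : Uᴴ = U := by rw [Matrix.conjTranspose_eq_transpose_of_trivial, hUt]
  have hURUpsd : (U * R * U).PosSemidef := by
    have := hRpsd.mul_mul_conjTranspose_same U
    rwa [hUconj] at this
  have hURUsq : (U * R * U) ^ 2 = K⁻¹ := by
    rw [pow_two]
    calc (U * R * U) * (U * R * U) = U * (R * (U * (U * (R * U)))) := by
          simp only [Matrix.mul_assoc]
    _ = U * (R * (R * U)) := by rw [mulw hUU, Matrix.one_mul]
    _ = U * (K⁻¹ * U) := by rw [mulw hRR]
    _ = K⁻¹ := by rw [← Matrix.mul_assoc, hUKiU]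
  have hURU : U * R * U = R := by
    have h : U * R * U = CFC.sqrt K⁻¹ :=
      (CFC.sqrt_unique (by rw [← pow_two]; exact hURUsq) hURUpsd.nonneg).symm
    rw [← hRdef] at h
    exact h
  have smul2zero : ∀ X : Matrix (Fin n) (Fin n) ℝ, X = -X → X = 0 := by
    intro X h
    have h3 : (2 : ℝ) • X = 0 := by
      rw [two_smul]
      nth_rewrite 2 [h]
      exact add_neg_cancel X
    rcases smul_eq_zero.mp h3 with h4 | h4
    · norm_num at h4
    · exact h4
  have hPRQ : P * (R * Q) = 0 := by
    have h := congrArg (fun X => P * X * Q) hURU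
    have hl : P * (U * R * U) * Q = -(P * (R * Q)) := by
      calc P * (U * R * U) * Q = (P * U) * R * (U * Q) := by simp only [Matrix.mul_assoc]
      _ = -(P * (R * Q)) := by rw [hPU, hUQ, Matrix.neg_mul, Matrix.neg_mul, Matrix.mul_assoc]
    rw [hl] at h
    apply smul2zero
    calc P * (R * Q) = P * R * Q := by rw [Matrix.mul_assoc]
    _ = -(P * (R * Q)) := h.symm
  have hQRP : Q * (R * P) = 0 := by
    have h := congrArg (fun X => Q * X * P) hURU
    have hl : Q * (U * R * U) * P = -(Q * (R * P)) := by
      calc Q * (U * R * U) * P = (Q * U) * R * (U * P) := by simp only [Matrix.mul_assoc]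
      _ = -(Q * (R * P)) := by rw [hQU, hUP, Matrix.mul_neg, Matrix.mul_assoc]
    rw [hl] at h
    apply smul2zero
    calc Q * (R * P) = Q * R * P := by rw [Matrix.mul_assoc]
    _ = -(Q * (R * P)) := h.symm
  have hRP : R * P = P * R := by
    have e1 : R * P = P * (R * P) := by
      calc R * P = (Q + P) * (R * P) := by rw [hQPone, Matrix.one_mul]
      _ = Q * (R * P) + P * (R * P) := by rw [Matrix.add_mul]
      _ = P * (R * P) := by rw [hQRP, zero_add]
    have e2 : P * R = P * (R * P) := by
      calc P * R = P * (R * (Q + P)) := by rw [hQPone, Matrix.mul_one]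
      _ = P * (R * Q + R * P) := by rw [Matrix.mul_add]
      _ = P * (R * Q) + P * (R * P) := by rw [Matrix.mul_add]
      _ = P * (R * P) := by rw [hPRQ, zero_add]
    rw [e1, e2]
  have hQR : Q * R = R * Q := by
    rw [hQdef, Matrix.sub_mul, Matrix.mul_sub, Matrix.one_mul, Matrix.mul_one, hRP]
  set M : Matrix (Fin n) (Fin n) ℝ := Q + R * G with hMdef
  clear_value M
  have hQM : Q * M = Q := by
    rw [hMdef, Matrix.mul_add, hQQ, ← Matrix.mul_assoc, hQR, Matrix.mul_assoc, hQG,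
      Matrix.mul_zero, add_zero]
  have hMt : Mᵀ = Q + Gᵀ * R := by
    rw [hMdef, transpose_add, hQt, Matrix.transpose_mul, hRt]
  have hGSGt : G * (S * Gᵀ) = K - Q := by rw [hKdef, add_sub_cancel_left]
  have hKeq : R⁻¹ * R⁻¹ = K := by
    rw [← Matrix.mul_inv_rev, hRR, Matrix.nonsing_inv_nonsing_inv K hKdet]
  have hRKR : R * K * R = 1 := by
    rw [← hKeq]
    calc R * (R⁻¹ * R⁻¹) * R = (R * R⁻¹) * (R⁻¹ * R) := by simp only [Matrix.mul_assoc]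
    _ = 1 := by rw [Matrix.mul_nonsing_inv R hRdet, Matrix.nonsing_inv_mul R hRdet,
      Matrix.one_mul]
  have hRQR : R * Q * R = Q := by
    rw [Matrix.mul_assoc, hQR, ← Matrix.mul_assoc, hRR, hKiQ]
  have hMSM : M * S * Mᵀ = Q * S * Q + P := by
    rw [hMt, hMdef]
    have expand : (Q + R * G) * S * (Q + Gᵀ * R)
        = Q * S * Q + Q * S * (Gᵀ * R) + (R * G * S * Q + R * G * S * (Gᵀ * R)) := by
      noncomm_ring
    have t2 : Q * S * (Gᵀ * R) = 0 := by
      rw [← Matrix.mul_assoc, hQSGt, Matrix.zero_mul]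
    have t3 : R * G * S * Q = 0 := by
      rw [Matrix.mul_assoc, Matrix.mul_assoc, hGSQ, Matrix.mul_zero]
    have t4 : R * G * S * (Gᵀ * R) = P := by
      have e : R * G * S * (Gᵀ * R) = R * (G * (S * Gᵀ)) * R := by
        simp only [Matrix.mul_assoc]
      rw [e, hGSGt, Matrix.mul_sub, Matrix.sub_mul, hRKR, hRQR]
      rw [hQdef, sub_sub_cancel]
    rw [expand, t2, t3, t4]
    abel
  have hAfin : M * S * Mᵀ = A := hMSM.trans hAdef.symm
  have hMdetne : M.det ≠ 0 := by
    have hdet := congrArg Matrix.det hAfin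
    rw [Matrix.det_mul, Matrix.det_mul, Matrix.det_transpose] at hdet
    intro h0
    rw [h0, zero_mul, zero_mul] at hdet
    exact (ne_of_gt hA.det_pos) hdet.symm
  refine ⟨M, hMdetne, ?_, ?_⟩
  · exact hQM
  · exact hAfin


lemma posDef_smul {n : ℕ} {S : Matrix (Fin n) (Fin n) ℝ} (hS : S.PosDef) {c : ℝ} (hc : 0 < c) :
    (c • S).PosDef := by
  refine Matrix.PosDef.of_dotProduct_mulVec_pos ?_ ?_
  · apply herm_of_transpose
    rw [Matrix.transpose_smul, transpose_of_herm hS.1]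
  · intro x hx
    rw [Matrix.smul_mulVec, dotProduct_smul]
    exact smul_pos hc (hS.dotProduct_mulVec_pos hx)

variable {n : ℕ}

lemma gaussian_density_continuous (a : Fin n → ℝ) (N : Matrix (Fin n) (Fin n) ℝ) (c : ℝ) :
    Continuous fun y : Fin n → ℝ =>
      ENNReal.ofReal (c * Real.exp (-(1 / 2) * ((y - a) ⬝ᵥ N *ᵥ (y - a)))) := by
  apply ENNReal.continuous_ofReal.comp
  apply Continuous.mul continuous_const
  apply Real.continuous_exp.comp
  apply Continuous.mul continuous_const
  have hsub : Continuous fun y : Fin n → ℝ => y - a := continuous_id.sub continuous_const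
  exact hsub.dotProduct (Continuous.matrix_mulVec continuous_const hsub)

lemma measurable_T (M : Matrix (Fin n) (Fin n) ℝ) (a : Fin n → ℝ) :
    Measurable fun x : Fin n → ℝ => M *ᵥ (x - a) + a := by
  apply Continuous.measurable
  have hsub : Continuous fun y : Fin n → ℝ => y - a := continuous_id.sub continuous_const
  exact (Continuous.matrix_mulVec continuous_const hsub).add continuous_const

lemma map_T_volume {M : Matrix (Fin n) (Fin n) ℝ} (hM : M.det ≠ 0) (a : Fin n → ℝ) :
    Measure.map (fun x : Fin n → ℝ => M *ᵥ (x - a) + a) volume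
      = ENNReal.ofReal |M.det⁻¹| • volume := by
  have hcomp : (fun x : Fin n → ℝ => M *ᵥ (x - a) + a)
      = (fun y => y + a) ∘ (Matrix.toLin' M) ∘ (fun x => x + (-a)) := by
    funext x
    simp [Matrix.toLin'_apply, sub_eq_add_neg]
  rw [hcomp]
  rw [← Measure.map_map (by fun_prop) (by
    apply Continuous.measurable
    exact (LinearMap.continuous_on_pi _).comp (continuous_id.add continuous_const))]
  rw [← Measure.map_map (by
    apply Continuous.measurable
    exact LinearMap.continuous_on_pi _) (by fun_prop)]
  rw [map_add_right_eq_self volume (-a)]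
  rw [Real.map_matrix_volume_pi_eq_smul_volume_pi hM]
  rw [Measure.map_smul]
  rw [map_add_right_eq_self volume a]

lemma gaussian_change (a : Fin n → ℝ) (S1 S2 M : Matrix (Fin n) (Fin n) ℝ)
    (h1 : S1.PosDef) (h2 : S2.PosDef) (hM : M * S1 * Mᵀ = S2)
    (W : Set (Fin n → ℝ)) (hW : MeasurableSet W)
    (hWinv : ∀ x, M *ᵥ (x - a) + a ∈ W ↔ x ∈ W) :
    gaussianMeasure a S2 W = gaussianMeasure a S1 W := by
  -- determinant facts
  have hdet2 : S2.det = M.det * S1.det * M.det := by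
    have := congrArg Matrix.det hM
    rw [Matrix.det_mul, Matrix.det_mul, Matrix.det_transpose] at this
    exact this.symm
  have hd1 : 0 < S1.det := h1.det_pos
  have hd2 : 0 < S2.det := h2.det_pos
  have hdM : M.det ≠ 0 := by
    intro h0
    rw [h0, zero_mul, zero_mul] at hdet2
    exact (ne_of_gt hd2) hdet2
  have hdMunit : IsUnit M.det := hdM.isUnit
  have hdMTunit : IsUnit Mᵀ.det := by rwa [Matrix.det_transpose]
  -- quadratic form identity : Mᵀ * S2⁻¹ * M = S1⁻¹
  have hquad : Mᵀ * S2⁻¹ * M = S1⁻¹ := by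
    have hinv : S2⁻¹ = Mᵀ⁻¹ * (S1⁻¹ * M⁻¹) := by
      rw [← hM, Matrix.mul_inv_rev, Matrix.mul_inv_rev]
    rw [hinv, ← Matrix.mul_assoc, Matrix.mul_nonsing_inv _ hdMTunit, Matrix.one_mul,
      Matrix.mul_assoc, Matrix.nonsing_inv_mul _ hdMunit, Matrix.mul_one]
  -- density functions
  set g1 : (Fin n → ℝ) → ℝ≥0∞ := fun y =>
    ENNReal.ofReal (Real.sqrt (((2 * Real.pi) ^ n * S1.det)⁻¹) *
      Real.exp (-(1 / 2) * ((y - a) ⬝ᵥ S1⁻¹ *ᵥ (y - a)))) with hg1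
  set g2 : (Fin n → ℝ) → ℝ≥0∞ := fun y =>
    ENNReal.ofReal (Real.sqrt (((2 * Real.pi) ^ n * S2.det)⁻¹) *
      Real.exp (-(1 / 2) * ((y - a) ⬝ᵥ S2⁻¹ *ᵥ (y - a)))) with hg2
  have hg1m : Measurable g1 := (gaussian_density_continuous a S1⁻¹ _).measurable
  have hg2m : Measurable g2 := (gaussian_density_continuous a S2⁻¹ _).measurable
  set T : (Fin n → ℝ) → (Fin n → ℝ) := fun x => M *ᵥ (x - a) + a with hT
  have hTm : Measurable T := measurable_T M a
  -- pointwise density identity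
  have hdens : ∀ x, ENNReal.ofReal |M.det| * g2 (T x) = g1 x := by
    intro x
    rw [hg1, hg2]
    simp only
    rw [← ENNReal.ofReal_mul (abs_nonneg _)]
    congr 1
    have hTsub : T x - a = M *ᵥ (x - a) := by rw [hT]; simp
    have hq : (T x - a) ⬝ᵥ S2⁻¹ *ᵥ (T x - a) = (x - a) ⬝ᵥ S1⁻¹ *ᵥ (x - a) := by
      rw [hTsub, ← hquad]
      exact (dot_conj M S2⁻¹ (x - a)).symm
    rw [hq]
    -- constants
    have hCpos : (0:ℝ) ≤ (2 * Real.pi) ^ n := by positivity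
    have hconst : |M.det| * Real.sqrt (((2 * Real.pi) ^ n * S2.det)⁻¹)
        = Real.sqrt (((2 * Real.pi) ^ n * S1.det)⁻¹) := by
      have e1 : ((2 * Real.pi) ^ n * S2.det)⁻¹
          = (M.det ^ 2)⁻¹ * ((2 * Real.pi) ^ n * S1.det)⁻¹ := by
        rw [hdet2, ← mul_inv]
        congr 1
        ring
      rw [e1, Real.sqrt_mul (by positivity), Real.sqrt_inv, Real.sqrt_sq_eq_abs]
      rw [← mul_assoc, mul_inv_cancel₀ (abs_ne_zero.mpr hdM), one_mul]
    rw [← mul_assoc, hconst]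
  -- measure computation
  have hmap : Measure.map T volume = ENNReal.ofReal |M.det⁻¹| • volume := map_T_volume hdM a
  have habs : ENNReal.ofReal |M.det| * ENNReal.ofReal |M.det⁻¹| = 1 := by
    rw [← ENNReal.ofReal_mul (abs_nonneg _), ← abs_mul, mul_inv_cancel₀ hdM]
    simp
  have hvol : volume = ENNReal.ofReal |M.det| • Measure.map T volume := by
    rw [hmap, smul_smul, habs, one_smul]
  calc gaussianMeasure a S2 W = ∫⁻ y, W.indicator g2 y ∂volume := by
        rw [gaussianMeasure, withDensity_apply _ hW, lintegral_indicator hW]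
  _ = ∫⁻ y, W.indicator g2 y ∂(ENNReal.ofReal |M.det| • Measure.map T volume) := by
        rw [← hvol]
  _ = ENNReal.ofReal |M.det| * ∫⁻ y, W.indicator g2 y ∂(Measure.map T volume) := by
        rw [lintegral_smul_measure, smul_eq_mul]
  _ = ENNReal.ofReal |M.det| * ∫⁻ x, W.indicator g2 (T x) ∂volume := by
        rw [lintegral_map (hg2m.indicator hW) hTm]
  _ = ∫⁻ x, ENNReal.ofReal |M.det| * W.indicator g2 (T x) ∂volume := by
        exact (lintegral_const_mul _ ((hg2m.indicator hW).comp hTm)).symm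
  _ = ∫⁻ x, W.indicator g1 x ∂volume := by
        congr 1
        funext x
        by_cases hx : x ∈ W
        · rw [Set.indicator_of_mem ((hWinv x).mpr hx), Set.indicator_of_mem hx, hdens]
        · rw [Set.indicator_of_notMem (fun hc => hx ((hWinv x).mp hc)),
            Set.indicator_of_notMem hx, mul_zero]
  _ = gaussianMeasure a S1 W := by
        rw [gaussianMeasure, withDensity_apply _ hW, lintegral_indicator hW]


end StmtAux

theorem stmt_11 {n : ℕ} (L : Submodule ℝ (Fin n → ℝ)) (hL : Module.finrank ℝ L < n)
    (P : Matrix (Fin n) (Fin n) ℝ) (hP : IsProjOnto P L)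
    (W : Set (Fin n → ℝ)) (hW : MeasurableSet W)
    (hinv : ∀ v ∈ L, ∀ y : Fin n → ℝ, (y + v ∈ W ↔ y ∈ W)) :
    ∀ (a : Fin n → ℝ) (σ : ℝ), 0 < σ →
      ∀ (S : Matrix (Fin n) (Fin n) ℝ), S.PosDef →
        gaussianMeasure a (σ ^ 2 • S) W =
          gaussianMeasure a
            (σ ^ 2 • (((1 : Matrix (Fin n) (Fin n) ℝ) - P) * S *
              ((1 : Matrix (Fin n) (Fin n) ℝ) - P) + P)) W := by
  intro a σ hσ S hS
  obtain ⟨M, hdet, hQM, hMSM⟩ := StmtAux.exists_M P S hP.1 hP.2.1 hS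
  have hσ2 : (0:ℝ) < σ ^ 2 := by positivity
  have h1 : (σ ^ 2 • S).PosDef := StmtAux.posDef_smul hS hσ2
  have hQSQP : (((1 : Matrix (Fin n) (Fin n) ℝ) - P) * S *
      ((1 : Matrix (Fin n) (Fin n) ℝ) - P) + P).PosDef :=
    StmtAux.posDef_QSQ_P P S hP.1 hP.2.1 hS
  have h2 : (σ ^ 2 • (((1 : Matrix (Fin n) (Fin n) ℝ) - P) * S *
      ((1 : Matrix (Fin n) (Fin n) ℝ) - P) + P)).PosDef :=
    StmtAux.posDef_smul hQSQP hσ2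
  have hcov : M * (σ ^ 2 • S) * Mᵀ
      = σ ^ 2 • (((1 : Matrix (Fin n) (Fin n) ℝ) - P) * S *
          ((1 : Matrix (Fin n) (Fin n) ℝ) - P) + P) := by
    rw [Matrix.mul_smul, Matrix.smul_mul, hMSM]
  have hWinv : ∀ x, M *ᵥ (x - a) + a ∈ W ↔ x ∈ W := by
    intro x
    set v : Fin n → ℝ := M *ᵥ (x - a) - (x - a) with hv
    have hQv : ((1 : Matrix (Fin n) (Fin n) ℝ) - P) *ᵥ v = 0 := by
      calc ((1 : Matrix (Fin n) (Fin n) ℝ) - P) *ᵥ v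
          = (((1 : Matrix (Fin n) (Fin n) ℝ) - P) * M) *ᵥ (x - a)
            - ((1 : Matrix (Fin n) (Fin n) ℝ) - P) *ᵥ (x - a) := by
            rw [hv, Matrix.mulVec_sub, Matrix.mulVec_mulVec]
      _ = 0 := by rw [hQM, sub_self]
    have hvP : P *ᵥ v = v := by
      rw [Matrix.sub_mulVec, Matrix.one_mulVec, sub_eq_zero] at hQv
      exact hQv.symm
    have hvL : v ∈ L := by rw [← hvP]; exact hP.2.2.1 v
    have hxv : M *ᵥ (x - a) + a = x + v := by rw [hv]; abel
    rw [hxv]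
    exact hinv v hvL x
  exact (StmtAux.gaussian_change a (σ ^ 2 • S) _ M h1 h2 hcov W hW hWinv).symm
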